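/- arXiv:0912.2909 — 2 statements merged into one kernel-verified Lean document; each statement's English description precedes it below -/
import Mathlib

section
/- Set U = (1/√2)·[[i, 1], [1, i]], W_a = [[e^{iα}, i e^{−iα}], [−i e^{iα}, e^{−iα}]], W_b = [[−i e^{iβ}, e^{−iβ}], [e^{iβ}, i e^{−iβ}]], and B(x) = U·[[−t(x), −q(x)], [p(x), t(x)]]·U† (U† the conjugate transpose). Given real-valued continuously differentiable f, g on [a,b] and λ ∈ ℝ, define u = (i f + g)/√2 and v = (f + i g)/√2. Then (f,g) satisfies the Dirac-type system with parameter λ together with the separated boundary conditions if and only if (u,v) satisfies the first-order system (u,v)'(x) = (λ·diag(iρ(x), −iρ(x)) + B(x))·(u,v)(x) on [a,b] together with the coupled boundary condition W_a·(u(a), v(a))ᵀ + W_b·(u(b), v(b))ᵀ = 0. -/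
open Matrix

section Helpers

private lemma sqrt2_sq : ((Real.sqrt 2 : ℝ) : ℂ) * ((Real.sqrt 2 : ℝ) : ℂ) = 2 := by
  exact_mod_cast Real.mul_self_sqrt (by norm_num : (0:ℝ) ≤ 2)

private lemma sqrt2_ne : ((Real.sqrt 2 : ℝ) : ℂ) ≠ 0 := by
  intro h
  have := sqrt2_sq
  rw [h] at this
  simp at this

private lemma Bcalc (t q p : ℝ) (U : Matrix (Fin 2) (Fin 2) ℂ)
    (hU : U = (1 / Real.sqrt 2 : ℝ) • !![Complex.I, 1; 1, Complex.I]) :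
    U * !![-(t : ℂ), -(q : ℂ); (p : ℂ), (t : ℂ)] * U.conjTranspose =
      (1/2 : ℂ) • !![-(Complex.I*((p:ℂ)+q)), ((p:ℂ) - q) - 2*Complex.I*t;
                     ((p:ℂ) - q) + 2*Complex.I*t, Complex.I*((p:ℂ)+q)] := by
  have h2 := sqrt2_sq
  have hne := sqrt2_ne
  subst hU
  ext i j
  fin_cases i <;> fin_cases j <;>
    simp [Matrix.mul_apply, Fin.sum_univ_two, Matrix.conjTranspose_apply, Matrix.smul_apply,
      Complex.real_smul, Complex.ext_iff] <;>
    field_simp <;> ring_nf <;> simp [Complex.ext_iff] <;> ring_nf <;> simp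

private lemma scalarODE (P Q T R F G F' G' lam : ℝ) (u v : ℂ)
    (hu : u = (Complex.I * F + G) / Real.sqrt 2)
    (hv : v = (F + Complex.I * G) / Real.sqrt 2) :
    (((lam:ℂ) * (Complex.I * R) * u
        + ((1/2:ℂ) * -(Complex.I*((P:ℂ)+Q)) * u
        + (1/2:ℂ)*(((P:ℂ) - Q) - 2*Complex.I*T) * v)
        = (Complex.I * F' + G') / Real.sqrt 2)
     ∧ ((lam:ℂ) * (-(Complex.I * R)) * v
        + ((1/2:ℂ)*(((P:ℂ) - Q) + 2*Complex.I*T) * u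
        + (1/2:ℂ)*(Complex.I*((P:ℂ)+Q)) * v)
        = (F' + Complex.I * G') / Real.sqrt 2))
    ↔ ((-G' + T * G + (P - lam * R) * F = 0) ∧ (F' + T * F + (Q - lam * R) * G = 0)) := by
  have h2 := sqrt2_sq
  have hne := sqrt2_ne
  have hne2 : ((Real.sqrt 2 : ℝ) : ℂ) * 2 ≠ 0 := by simp [hne]
  subst hu hv
  rw [show ((lam:ℂ) * (Complex.I * R) * ((Complex.I * F + G) / Real.sqrt 2)
        + ((1/2:ℂ) * -(Complex.I*((P:ℂ)+Q)) * ((Complex.I * F + G) / Real.sqrt 2)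
        + (1/2:ℂ)*(((P:ℂ) - Q) - 2*Complex.I*T) * ((F + Complex.I * G) / Real.sqrt 2)))
      = ((lam:ℂ) * (Complex.I * R) * (Complex.I * F + G) * 2
        + (-(Complex.I*((P:ℂ)+Q)) * (Complex.I * F + G)
        + (((P:ℂ) - Q) - 2*Complex.I*T) * (F + Complex.I * G))) / (Real.sqrt 2 * 2) from by ring,
    show ((Complex.I * (F':ℂ) + G') / Real.sqrt 2 : ℂ)
      = (Complex.I * (F':ℂ) + G') * 2 / (Real.sqrt 2 * 2) from by ring,
    div_left_inj' hne2,
    show ((lam:ℂ) * (-(Complex.I * R)) * ((F + Complex.I * G) / Real.sqrt 2)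
        + ((1/2:ℂ)*(((P:ℂ) - Q) + 2*Complex.I*T) * ((Complex.I * F + G) / Real.sqrt 2)
        + (1/2:ℂ)*(Complex.I*((P:ℂ)+Q)) * ((F + Complex.I * G) / Real.sqrt 2)))
      = ((lam:ℂ) * (-(Complex.I * R)) * (F + Complex.I * G) * 2
        + ((((P:ℂ) - Q) + 2*Complex.I*T) * (Complex.I * F + G)
        + (Complex.I*((P:ℂ)+Q)) * (F + Complex.I * G))) / (Real.sqrt 2 * 2) from by ring,
    show (((F':ℂ) + Complex.I * G') / Real.sqrt 2 : ℂ)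
      = ((F':ℂ) + Complex.I * G') * 2 / (Real.sqrt 2 * 2) from by ring,
    div_left_inj' hne2]
  simp only [Complex.ext_iff, Complex.add_re, Complex.add_im, Complex.mul_re, Complex.mul_im,
    Complex.ofReal_re, Complex.ofReal_im, Complex.I_re, Complex.I_im, Complex.neg_re,
    Complex.neg_im, Complex.sub_re, Complex.sub_im, Complex.one_re, Complex.one_im,
    Complex.re_ofNat, Complex.im_ofNat]
  ring_nf
  constructor
  · rintro ⟨⟨e1, e2⟩, e3, e4⟩
    constructor <;> linarith
  · rintro ⟨e1, e2⟩
    refine ⟨⟨by linarith, by linarith⟩, by linarith, by linarith⟩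

private lemma vecpair_zero (x y : Fin 2 → ℂ) :
    x + y = 0 ↔ (x 0 + y 0 = 0 ∧ x 1 + y 1 = 0) := by
  constructor
  · intro h
    exact ⟨by rw [← Pi.add_apply, h]; rfl, by rw [← Pi.add_apply, h]; rfl⟩
  · rintro ⟨h0, h1⟩
    funext i
    fin_cases i
    · simpa using h0
    · simpa using h1

end Helpers
private lemma bcEquiv (α β fa ga fb gb : ℝ) (ua va ub vb : ℂ)
    (hua : ua = (Complex.I * fa + ga) / Real.sqrt 2)
    (hva : va = (fa + Complex.I * ga) / Real.sqrt 2)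
    (hub : ub = (Complex.I * fb + gb) / Real.sqrt 2)
    (hvb : vb = (fb + Complex.I * gb) / Real.sqrt 2) :
    ((!![Complex.exp (Complex.I * α), Complex.I * Complex.exp (-(Complex.I * α));
         -(Complex.I * Complex.exp (Complex.I * α)), Complex.exp (-(Complex.I * α))]).mulVec ![ua, va]
      + (!![-(Complex.I * Complex.exp (Complex.I * β)), Complex.exp (-(Complex.I * β));
           Complex.exp (Complex.I * β), Complex.I * Complex.exp (-(Complex.I * β))]).mulVec ![ub, vb] = 0)
    ↔ (fa * Real.cos α + ga * Real.sin α = 0 ∧ fb * Real.cos β + gb * Real.sin β = 0) := by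
  have h2 := sqrt2_sq
  have hne := sqrt2_ne
  have ea : Complex.exp (Complex.I * α) = (Real.cos α : ℂ) + (Real.sin α : ℂ) * Complex.I := by
    rw [mul_comm, Complex.exp_mul_I, Complex.ofReal_cos, Complex.ofReal_sin]
  have ea' : Complex.exp (-(Complex.I * α)) = (Real.cos α : ℂ) - (Real.sin α : ℂ) * Complex.I := by
    rw [show -(Complex.I * (α:ℂ)) = ((-α : ℝ):ℂ) * Complex.I by push_cast; ring,
      Complex.exp_mul_I]
    push_cast
    rw [Complex.cos_neg, Complex.sin_neg, ← Complex.ofReal_cos, ← Complex.ofReal_sin]; ring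
  have eb : Complex.exp (Complex.I * β) = (Real.cos β : ℂ) + (Real.sin β : ℂ) * Complex.I := by
    rw [mul_comm, Complex.exp_mul_I, Complex.ofReal_cos, Complex.ofReal_sin]
  have eb' : Complex.exp (-(Complex.I * β)) = (Real.cos β : ℂ) - (Real.sin β : ℂ) * Complex.I := by
    rw [show -(Complex.I * (β:ℂ)) = ((-β : ℝ):ℂ) * Complex.I by push_cast; ring,
      Complex.exp_mul_I]
    push_cast
    rw [Complex.cos_neg, Complex.sin_neg, ← Complex.ofReal_cos, ← Complex.ofReal_sin]; ring
  subst hua hva hub hvb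
  rw [ea, ea', eb, eb']
  have hC : ∀ z : ℂ, z / ((Real.sqrt 2 : ℝ) : ℂ) = 0 ↔ z = 0 := by
    intro z
    rw [div_eq_zero_iff]
    simp [hne]
  rw [vecpair_zero,
    show (!![(Real.cos α : ℂ) + (Real.sin α : ℂ) * Complex.I,
             Complex.I * ((Real.cos α : ℂ) - (Real.sin α : ℂ) * Complex.I);
             -(Complex.I * ((Real.cos α : ℂ) + (Real.sin α : ℂ) * Complex.I)),
             (Real.cos α : ℂ) - (Real.sin α : ℂ) * Complex.I]).mulVec
        ![(Complex.I * fa + ga) / Real.sqrt 2, (fa + Complex.I * ga) / Real.sqrt 2] 0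
      + (!![-(Complex.I * ((Real.cos β : ℂ) + (Real.sin β : ℂ) * Complex.I)),
             (Real.cos β : ℂ) - (Real.sin β : ℂ) * Complex.I;
             (Real.cos β : ℂ) + (Real.sin β : ℂ) * Complex.I,
             Complex.I * ((Real.cos β : ℂ) - (Real.sin β : ℂ) * Complex.I)]).mulVec
        ![(Complex.I * fb + gb) / Real.sqrt 2, (fb + Complex.I * gb) / Real.sqrt 2] 0
      = (((Real.cos α : ℂ) + (Real.sin α : ℂ) * Complex.I) * (Complex.I * fa + ga)
        + Complex.I * ((Real.cos α : ℂ) - (Real.sin α : ℂ) * Complex.I) * (fa + Complex.I * ga)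
        + (-(Complex.I * ((Real.cos β : ℂ) + (Real.sin β : ℂ) * Complex.I))) * (Complex.I * fb + gb)
        + ((Real.cos β : ℂ) - (Real.sin β : ℂ) * Complex.I) * (fb + Complex.I * gb)) / Real.sqrt 2
      from by
        simp [Matrix.mulVec, dotProduct, Fin.sum_univ_two]
        ring,
    show (!![(Real.cos α : ℂ) + (Real.sin α : ℂ) * Complex.I,
             Complex.I * ((Real.cos α : ℂ) - (Real.sin α : ℂ) * Complex.I);
             -(Complex.I * ((Real.cos α : ℂ) + (Real.sin α : ℂ) * Complex.I)),
             (Real.cos α : ℂ) - (Real.sin α : ℂ) * Complex.I]).mulVec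
        ![(Complex.I * fa + ga) / Real.sqrt 2, (fa + Complex.I * ga) / Real.sqrt 2] 1
      + (!![-(Complex.I * ((Real.cos β : ℂ) + (Real.sin β : ℂ) * Complex.I)),
             (Real.cos β : ℂ) - (Real.sin β : ℂ) * Complex.I;
             (Real.cos β : ℂ) + (Real.sin β : ℂ) * Complex.I,
             Complex.I * ((Real.cos β : ℂ) - (Real.sin β : ℂ) * Complex.I)]).mulVec
        ![(Complex.I * fb + gb) / Real.sqrt 2, (fb + Complex.I * gb) / Real.sqrt 2] 1
      = ((-(Complex.I * ((Real.cos α : ℂ) + (Real.sin α : ℂ) * Complex.I))) * (Complex.I * fa + ga)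
        + ((Real.cos α : ℂ) - (Real.sin α : ℂ) * Complex.I) * (fa + Complex.I * ga)
        + ((Real.cos β : ℂ) + (Real.sin β : ℂ) * Complex.I) * (Complex.I * fb + gb)
        + Complex.I * ((Real.cos β : ℂ) - (Real.sin β : ℂ) * Complex.I) * (fb + Complex.I * gb)) / Real.sqrt 2
      from by
        simp [Matrix.mulVec, dotProduct, Fin.sum_univ_two]
        ring,
    hC, hC]
  simp only [Complex.ext_iff, Complex.add_re, Complex.add_im, Complex.mul_re, Complex.mul_im,
    Complex.ofReal_re, Complex.ofReal_im, Complex.I_re, Complex.I_im, Complex.neg_re,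
    Complex.neg_im, Complex.sub_re, Complex.sub_im, Complex.zero_re, Complex.zero_im]
  ring_nf
  constructor
  · rintro ⟨⟨e1, e2⟩, e3, e4⟩
    constructor <;> linarith
  · rintro ⟨e1, e2⟩
    refine ⟨⟨by linarith, by linarith⟩, by linarith, by linarith⟩


/-- The separated boundary conditions
`f(a) cos α + g(a) sin α = 0` and `f(b) cos β + g(b) sin β = 0`. -/
def DiracBC (a b α β : ℝ) (f g : ℝ → ℝ) : Prop :=
  f a * Real.cos α + g a * Real.sin α = 0 ∧
  f b * Real.cos β + g b * Real.sin β = 0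

/-- With `U = (1/√2)[[i,1],[1,i]]`, `W_a = [[e^{iα}, i e^{-iα}],[-i e^{iα}, e^{-iα}]]`,
`W_b = [[-i e^{iβ}, e^{-iβ}],[e^{iβ}, i e^{-iβ}]]`, `B = U [[-t,-q],[p,t]] U†`,
and `u = (i f + g)/√2`, `v = (f + i g)/√2`, the pair `(f,g)` satisfies the
Dirac-type system with parameter `lam` and the separated boundary conditions
iff `(u,v)` satisfies `(u,v)' = (lam diag(iρ, -iρ) + B)(u,v)` on `[a,b]` with
the coupled boundary condition `W_a (u(a),v(a))ᵀ + W_b (u(b),v(b))ᵀ = 0`. -/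
theorem dirac_system_unitary_transformation
    (a b : ℝ) (hab : a < b)
    (p q t ρ : ℝ → ℝ)
    (hp : ContDiffOn ℝ 1 p (Set.Icc a b)) (hq : ContDiffOn ℝ 1 q (Set.Icc a b))
    (ht : ContDiffOn ℝ 1 t (Set.Icc a b)) (hρ : ContDiffOn ℝ 1 ρ (Set.Icc a b))
    (hρpos : ∀ x ∈ Set.Icc a b, 0 < ρ x)
    (α β : ℝ) (hα : α ∈ Set.Ico 0 (2 * Real.pi)) (hβ : β ∈ Set.Ico 0 (2 * Real.pi))
    (U Wa Wb : Matrix (Fin 2) (Fin 2) ℂ)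
    (hU : U = (1 / Real.sqrt 2 : ℝ) • !![Complex.I, 1; 1, Complex.I])
    (hWa : Wa = !![Complex.exp (Complex.I * α), Complex.I * Complex.exp (-(Complex.I * α));
                   -(Complex.I * Complex.exp (Complex.I * α)), Complex.exp (-(Complex.I * α))])
    (hWb : Wb = !![-(Complex.I * Complex.exp (Complex.I * β)), Complex.exp (-(Complex.I * β));
                   Complex.exp (Complex.I * β), Complex.I * Complex.exp (-(Complex.I * β))])
    (B : ℝ → Matrix (Fin 2) (Fin 2) ℂ)
    (hB : ∀ x, B x = U * !![-(t x : ℂ), -(q x : ℂ); (p x : ℂ), (t x : ℂ)] * U.conjTranspose)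
    (lam : ℝ)
    (f g f' g' : ℝ → ℝ)
    (hf' : ∀ x ∈ Set.Icc a b, HasDerivWithinAt f (f' x) (Set.Icc a b) x)
    (hg' : ∀ x ∈ Set.Icc a b, HasDerivWithinAt g (g' x) (Set.Icc a b) x)
    (hf'c : ContinuousOn f' (Set.Icc a b)) (hg'c : ContinuousOn g' (Set.Icc a b))
    (u v : ℝ → ℂ)
    (hu : ∀ x, u x = (Complex.I * f x + g x) / Real.sqrt 2)
    (hv : ∀ x, v x = (f x + Complex.I * g x) / Real.sqrt 2) :
    ((∀ x ∈ Set.Icc a b, -g' x + t x * g x + (p x - lam * ρ x) * f x = 0) ∧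
     (∀ x ∈ Set.Icc a b, f' x + t x * f x + (q x - lam * ρ x) * g x = 0) ∧
     DiracBC a b α β f g) ↔
    ((∀ x ∈ Set.Icc a b,
        HasDerivWithinAt (fun s : ℝ => ![u s, v s])
          (((lam : ℂ) • Matrix.diagonal
              ![Complex.I * (ρ x : ℂ), -(Complex.I * (ρ x : ℂ))] + B x).mulVec
            ![u x, v x])
          (Set.Icc a b) x) ∧
     Wa.mulVec ![u a, v a] + Wb.mulVec ![u b, v b] = 0) := by
  have udiff : UniqueDiffOn ℝ (Set.Icc a b) := uniqueDiffOn_Icc hab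
  -- derivatives of the complexified functions
  have hfC : ∀ x ∈ Set.Icc a b,
      HasDerivWithinAt (fun s => ((f s : ℝ) : ℂ)) ((f' x : ℝ) : ℂ) (Set.Icc a b) x := by
    intro x hx
    exact (hf' x hx).ofReal_comp
  have hgC : ∀ x ∈ Set.Icc a b,
      HasDerivWithinAt (fun s => ((g s : ℝ) : ℂ)) ((g' x : ℝ) : ℂ) (Set.Icc a b) x := by
    intro x hx
    exact (hg' x hx).ofReal_comp
  have hufun : u = fun s => (Complex.I * f s + g s) / Real.sqrt 2 := funext hu
  have hvfun : v = fun s => (f s + Complex.I * g s) / Real.sqrt 2 := funext hv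
  have hud : ∀ x ∈ Set.Icc a b,
      HasDerivWithinAt u ((Complex.I * f' x + g' x) / Real.sqrt 2) (Set.Icc a b) x := by
    intro x hx
    rw [hufun]
    exact (((hfC x hx).const_mul Complex.I).add (hgC x hx)).div_const _
  have hvd : ∀ x ∈ Set.Icc a b,
      HasDerivWithinAt v ((f' x + Complex.I * g' x) / Real.sqrt 2) (Set.Icc a b) x := by
    intro x hx
    rw [hvfun]
    exact ((hfC x hx).add ((hgC x hx).const_mul Complex.I)).div_const _
  have hUV : ∀ x ∈ Set.Icc a b,
      HasDerivWithinAt (fun s : ℝ => ![u s, v s])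
        ![(Complex.I * f' x + g' x) / Real.sqrt 2, (f' x + Complex.I * g' x) / Real.sqrt 2]
        (Set.Icc a b) x := by
    intro x hx
    apply hasDerivWithinAt_pi.2
    intro i
    fin_cases i
    · simpa using hud x hx
    · simpa using hvd x hx
  -- components of the matrix-vector product
  have hcomp0 : ∀ x, (((lam : ℂ) • Matrix.diagonal
        ![Complex.I * (ρ x : ℂ), -(Complex.I * (ρ x : ℂ))] + B x).mulVec ![u x, v x]) 0
      = (lam:ℂ) * (Complex.I * (ρ x)) * u x
        + ((1/2:ℂ) * -(Complex.I*((p x:ℂ)+ q x)) * u x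
        + (1/2:ℂ)*(((p x:ℂ) - q x) - 2*Complex.I*(t x)) * v x) := by
    intro x
    rw [hB x, Bcalc (t x) (q x) (p x) U hU]
    simp [Matrix.mulVec, dotProduct, Fin.sum_univ_two, Matrix.diagonal]
    ring
  have hcomp1 : ∀ x, (((lam : ℂ) • Matrix.diagonal
        ![Complex.I * (ρ x : ℂ), -(Complex.I * (ρ x : ℂ))] + B x).mulVec ![u x, v x]) 1
      = (lam:ℂ) * (-(Complex.I * (ρ x))) * v x
        + ((1/2:ℂ)*(((p x:ℂ) - q x) + 2*Complex.I*(t x)) * u x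
        + (1/2:ℂ)*(Complex.I*((p x:ℂ)+ q x)) * v x) := by
    intro x
    rw [hB x, Bcalc (t x) (q x) (p x) U hU]
    simp [Matrix.mulVec, dotProduct, Fin.sum_univ_two, Matrix.diagonal]
    ring
  -- pointwise equivalence of the ODE
  have keyx : ∀ x ∈ Set.Icc a b,
      (HasDerivWithinAt (fun s : ℝ => ![u s, v s])
          (((lam : ℂ) • Matrix.diagonal
              ![Complex.I * (ρ x : ℂ), -(Complex.I * (ρ x : ℂ))] + B x).mulVec ![u x, v x])
          (Set.Icc a b) x)
      ↔ ((-g' x + t x * g x + (p x - lam * ρ x) * f x = 0) ∧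
         (f' x + t x * f x + (q x - lam * ρ x) * g x = 0)) := by
    intro x hx
    constructor
    · intro h
      have hD := ((h.derivWithin (udiff x hx)).symm.trans
        ((hUV x hx).derivWithin (udiff x hx)))
      have h0 := congrFun hD 0
      have h1 := congrFun hD 1
      rw [hcomp0 x] at h0
      rw [hcomp1 x] at h1
      simp only [Matrix.cons_val_zero, Matrix.cons_val_one, Matrix.head_cons] at h0 h1
      exact (scalarODE (p x) (q x) (t x) (ρ x) (f x) (g x) (f' x) (g' x) lam
        (u x) (v x) (hu x) (hv x)).mp ⟨h0, h1⟩
    · intro h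
      have heq := (scalarODE (p x) (q x) (t x) (ρ x) (f x) (g x) (f' x) (g' x) lam
        (u x) (v x) (hu x) (hv x)).mpr h
      have hD : (((lam : ℂ) • Matrix.diagonal
          ![Complex.I * (ρ x : ℂ), -(Complex.I * (ρ x : ℂ))] + B x).mulVec ![u x, v x])
          = ![(Complex.I * f' x + g' x) / Real.sqrt 2,
              (f' x + Complex.I * g' x) / Real.sqrt 2] := by
        funext i
        fin_cases i
        · exact (hcomp0 x).trans heq.1
        · exact (hcomp1 x).trans heq.2
      rw [hD]
      exact hUV x hx
  -- boundary conditions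
  have hbc : (Wa.mulVec ![u a, v a] + Wb.mulVec ![u b, v b] = 0) ↔ DiracBC a b α β f g := by
    rw [hWa, hWb]
    exact bcEquiv α β (f a) (g a) (f b) (g b) (u a) (v a) (u b) (v b)
      (hu a) (hv a) (hu b) (hv b)
  constructor
  · rintro ⟨h1, h2, h3⟩
    exact ⟨fun x hx => (keyx x hx).mpr ⟨h1 x hx, h2 x hx⟩, hbc.mpr h3⟩
  · rintro ⟨h1, h2⟩
    exact ⟨fun x hx => ((keyx x hx).mp (h1 x hx)).1,
      fun x hx => ((keyx x hx).mp (h1 x hx)).2, hbc.mp h2⟩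
end

section
/- Expansion-coefficient identity of the relativistic R-matrix theory: under the stated hypotheses, including P(0) = Q(0) = P_i(0) = Q_i(0) = 0 and the artificial boundary condition Q_i(ϱ) = (ℏ/(2mc))·b·P_i(ϱ), one has (E_i − E)·∫₀^ϱ (P_i(r)P(r) + Q_i(r)Q(r)) dr = (ℏ²/2m)·P_i(ϱ)·[(2mc/ℏ)·Q(ϱ) − b·P(ϱ)]. -/
/-- Expansion-coefficient identity of the relativistic R-matrix theory:
if `(P,Q)` and `(Pᵢ,Qᵢ)` solve the radial Dirac equations on `(0,ϱ]` with
energies `E` and `Eᵢ`, vanish at the origin, and `(Pᵢ,Qᵢ)` satisfies the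
artificial boundary condition `Qᵢ(ϱ) = (ℏ/(2mc)) b Pᵢ(ϱ)`, then
`(Eᵢ - E) ∫₀^ϱ (Pᵢ P + Qᵢ Q) = (ℏ²/2m) Pᵢ(ϱ) ((2mc/ℏ) Q(ϱ) - b P(ϱ))`. -/
theorem relativistic_rmatrix_coefficient_identity
    (ϱ ℏ m c b E Ei : ℝ) (hϱ : 0 < ϱ) (hℏ : 0 < ℏ) (hm : 0 < m) (hc : 0 < c)
    (hE : E ≠ Ei)
    (κ : ℤ) (hκ : κ ≠ 0)
    (V : ℝ → ℝ) (hV : ContinuousOn V (Set.Ioc 0 ϱ))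
    (P Q P' Q' Pi Qi Pi' Qi' : ℝ → ℝ)
    -- (P,Q) is continuous on [0,ϱ], C¹ on (0,ϱ], and vanishes at the origin
    (hPc : ContinuousOn P (Set.Icc 0 ϱ)) (hQc : ContinuousOn Q (Set.Icc 0 ϱ))
    (hPd : ∀ r ∈ Set.Ioc 0 ϱ, HasDerivWithinAt P (P' r) (Set.Ioc 0 ϱ) r)
    (hQd : ∀ r ∈ Set.Ioc 0 ϱ, HasDerivWithinAt Q (Q' r) (Set.Ioc 0 ϱ) r)
    (hP'c : ContinuousOn P' (Set.Ioc 0 ϱ)) (hQ'c : ContinuousOn Q' (Set.Ioc 0 ϱ))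
    (hP0 : P 0 = 0) (hQ0 : Q 0 = 0)
    -- (Pᵢ,Qᵢ) is continuous on [0,ϱ], C¹ on (0,ϱ], and vanishes at the origin
    (hPic : ContinuousOn Pi (Set.Icc 0 ϱ)) (hQic : ContinuousOn Qi (Set.Icc 0 ϱ))
    (hPid : ∀ r ∈ Set.Ioc 0 ϱ, HasDerivWithinAt Pi (Pi' r) (Set.Ioc 0 ϱ) r)
    (hQid : ∀ r ∈ Set.Ioc 0 ϱ, HasDerivWithinAt Qi (Qi' r) (Set.Ioc 0 ϱ) r)
    (hPi'c : ContinuousOn Pi' (Set.Ioc 0 ϱ)) (hQi'c : ContinuousOn Qi' (Set.Ioc 0 ϱ))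
    (hPi0 : Pi 0 = 0) (hQi0 : Qi 0 = 0)
    -- the radial Dirac equations on (0,ϱ] for (P,Q) with energy E
    (heqP : ∀ r ∈ Set.Ioc 0 ϱ,
      c * ℏ * (-Q' r + (κ / r : ℝ) * Q r) + (m * c ^ 2 + V r - E) * P r = 0)
    (heqQ : ∀ r ∈ Set.Ioc 0 ϱ,
      c * ℏ * (P' r + (κ / r : ℝ) * P r) + (-(m * c ^ 2) + V r - E) * Q r = 0)
    -- the radial Dirac equations on (0,ϱ] for (Pᵢ,Qᵢ) with energy Eᵢ
    (heqPi : ∀ r ∈ Set.Ioc 0 ϱ,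
      c * ℏ * (-Qi' r + (κ / r : ℝ) * Qi r) + (m * c ^ 2 + V r - Ei) * Pi r = 0)
    (heqQi : ∀ r ∈ Set.Ioc 0 ϱ,
      c * ℏ * (Pi' r + (κ / r : ℝ) * Pi r) + (-(m * c ^ 2) + V r - Ei) * Qi r = 0)
    -- the artificial R-matrix boundary condition for (Pᵢ,Qᵢ) at r = ϱ
    (hbc : Qi ϱ = (ℏ / (2 * m * c)) * b * Pi ϱ) :
    (Ei - E) * (∫ r in (0:ℝ)..ϱ, (Pi r * P r + Qi r * Q r))
      = (ℏ ^ 2 / (2 * m)) * Pi ϱ * ((2 * m * c / ℏ) * Q ϱ - b * P ϱ) := by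
  set W : ℝ → ℝ := fun r => c * ℏ * (Pi r * Q r - P r * Qi r) with hW
  set g : ℝ → ℝ := fun r => (Ei - E) * (Pi r * P r + Qi r * Q r) with hg
  have hWc : ContinuousOn W (Set.Icc 0 ϱ) :=
    (continuousOn_const.mul ((hPic.mul hQc).sub (hPc.mul hQic)))
  have hderiv : ∀ x ∈ Set.Ioo 0 ϱ, HasDerivWithinAt W (g x) (Set.Ioi x) x := by
    intro x hx
    have hx' : x ∈ Set.Ioc 0 ϱ := ⟨hx.1, hx.2.le⟩
    have hmem : Set.Ioc 0 ϱ ∈ nhdsWithin x (Set.Ioi x) := by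
      apply mem_nhdsWithin.2
      exact ⟨Set.Iio ϱ, isOpen_Iio, hx.2, fun y hy => ⟨lt_trans hx.1 hy.2, hy.1.le⟩⟩
    have hWd : HasDerivWithinAt W
        (c * ℏ * ((Pi' x * Q x + Pi x * Q' x) - (P' x * Qi x + P x * Qi' x)))
        (Set.Ioc 0 ϱ) x :=
      (((hPid x hx').mul (hQd x hx')).sub ((hPd x hx').mul (hQid x hx'))).const_mul _
    have hval : c * ℏ * ((Pi' x * Q x + Pi x * Q' x) - (P' x * Qi x + P x * Qi' x)) = g x := by
      have h1 := heqP x hx'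
      have h2 := heqQ x hx'
      have h3 := heqPi x hx'
      have h4 := heqQi x hx'
      simp only [hg]
      linear_combination Q x * h4 - Pi x * h1 - Qi x * h2 + P x * h3
    exact (show HasDerivWithinAt W (g x) (Set.Ioc 0 ϱ) x from hval ▸ hWd).mono_of_mem_nhdsWithin hmem
  have hgint : IntervalIntegrable g MeasureTheory.volume 0 ϱ := by
    apply ContinuousOn.intervalIntegrable
    rw [Set.uIcc_of_le hϱ.le]
    exact continuousOn_const.mul ((hPic.mul hPc).add (hQic.mul hQc))
  have hFTC : ∫ r in (0:ℝ)..ϱ, g r = W ϱ - W 0 :=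
    intervalIntegral.integral_eq_sub_of_hasDeriv_right_of_le hϱ.le hWc hderiv hgint
  have hW0 : W 0 = 0 := by simp [hW, hP0, hQ0, hPi0, hQi0]
  have hint : (Ei - E) * (∫ r in (0:ℝ)..ϱ, (Pi r * P r + Qi r * Q r)) = W ϱ := by
    rw [← intervalIntegral.integral_const_mul]
    rw [hFTC, hW0]; ring
  rw [hint]
  simp only [hW, hbc]
  have hm0 : m ≠ 0 := hm.ne'
  have hc0 : c ≠ 0 := hc.ne'
  have hℏ0 : ℏ ≠ 0 := hℏ.ne'
  field_simp
end
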